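/- With ρ(a) as above, writing ρ(a) = (m+1)(1 - ε_a), one has (m+1)^{a+2}·(1-ε_a)^{a+1}·ε_a = m, and consequently ε_a·(m+1)^{a+2} → m as a → ∞, i.e., (m+1) - ρ(a) ∼ m·(m+1)^{-a-1}. -/

import Mathlib

open Filter

/-- Writing `ρ a = (m+1)(1 - ε a)`, one has
`(m+1)^(a+2)·(1-ε a)^(a+1)·ε a = m`, and consequently `ε a·(m+1)^(a+2) → m` as `a → ∞`,
i.e. `(m+1) - ρ a ∼ m·(m+1)^(-a-1)`. -/
theorem stmt2 (m : ℝ) (hm : 0 < m) (ρ : ℕ → ℝ)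
    (hpos : ∀ a, 0 < ρ a)
    (hroot : ∀ a, (ρ a) ^ (a + 1) = m * ∑ k ∈ Finset.range (a + 1), (ρ a) ^ k)
    (hbounds : ∀ a : ℕ, ((a : ℝ) + 1) / ((a : ℝ) + 2) * (m + 1) ≤ ρ a ∧ ρ a ≤ m + 1)
    (ε : ℕ → ℝ) (hε : ∀ a, ε a = 1 - ρ a / (m + 1)) :
    (∀ a : ℕ, (m + 1) ^ (a + 2) * (1 - ε a) ^ (a + 1) * ε a = m) ∧
      Tendsto (fun a : ℕ => ε a * (m + 1) ^ (a + 2)) atTop (nhds m) ∧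
      Tendsto (fun a : ℕ => ((m + 1) - ρ a) / (m * (m + 1) ^ (-(a : ℤ) - 1)))
        atTop (nhds 1) := by
  have hm1 : (0:ℝ) < m + 1 := by linarith
  have hm1' : (1:ℝ) < m + 1 := by linarith
  have hρε : ∀ a, ρ a = (m + 1) * (1 - ε a) := by
    intro a; rw [hε a]; field_simp; ring
  -- the key algebraic identity
  have hid : ∀ a : ℕ, (m + 1) ^ (a + 2) * (1 - ε a) ^ (a + 1) * ε a = m := by
    intro a
    have hg : (ρ a) ^ (a + 1) * (ρ a - 1) = m * ((ρ a) ^ (a + 1) - 1) := by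
      calc (ρ a) ^ (a + 1) * (ρ a - 1)
          = (m * ∑ k ∈ Finset.range (a + 1), (ρ a) ^ k) * (ρ a - 1) := by rw [← hroot a]
        _ = m * ((∑ k ∈ Finset.range (a + 1), (ρ a) ^ k) * (ρ a - 1)) := by ring
        _ = m * ((ρ a) ^ (a + 1) - 1) := by rw [geom_sum_mul]
    rw [hρε a, mul_pow] at hg
    linear_combination -hg
  have hε0 : ∀ a, 0 ≤ ε a := by
    intro a
    have h2 : ρ a / (m + 1) ≤ 1 := by
      rw [div_le_one hm1]; exact (hbounds a).2
    rw [hε a]; linarith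
  have hεlt : ∀ a : ℕ, ((a : ℝ) + 1) / ((a : ℝ) + 2) ≤ 1 - ε a := by
    intro a
    have h := (hbounds a).1
    have h2 : ((a : ℝ) + 1) / ((a : ℝ) + 2) ≤ ρ a / (m + 1) := by
      rw [le_div_iff₀ hm1]; exact h
    rw [hε a]; linarith
  have hgpos : ∀ a : ℕ, 0 < 1 - ε a := by
    intro a
    refine lt_of_lt_of_le ?_ (hεlt a)
    positivity
  -- lower bound 1/3 on (1-ε)^(a+1)
  have hg13 : ∀ a : ℕ, (1/3 : ℝ) ≤ (1 - ε a) ^ (a + 1) := by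
    intro a
    have hA : (0:ℝ) < (a : ℝ) + 1 := by positivity
    have hexp : (1 + 1 / ((a : ℝ) + 1)) ^ (a + 1) ≤ 3 := by
      have h1 : (1 + 1 / ((a : ℝ) + 1)) ≤ Real.exp (1 / ((a : ℝ) + 1)) := by
        have := Real.add_one_le_exp (1 / ((a : ℝ) + 1)); linarith
      have h2 : (1 + 1 / ((a : ℝ) + 1)) ^ (a + 1) ≤
          Real.exp (1 / ((a : ℝ) + 1)) ^ (a + 1) := by
        apply pow_le_pow_left₀ (by positivity) h1
      have h3 : Real.exp (1 / ((a : ℝ) + 1)) ^ (a + 1) = Real.exp 1 := by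
        rw [← Real.exp_nat_mul]
        congr 1
        field_simp
        push_cast; ring
      have h4 : Real.exp 1 < 3 := by
        have := Real.exp_one_lt_d9; norm_num at this ⊢; linarith
      calc (1 + 1 / ((a : ℝ) + 1)) ^ (a + 1) ≤ Real.exp 1 := h3 ▸ h2
        _ ≤ 3 := h4.le
    have hq : ((a : ℝ) + 1) / ((a : ℝ) + 2) = (1 + 1 / ((a : ℝ) + 1))⁻¹ := by
      rw [show (1:ℝ) + 1 / ((a : ℝ) + 1) = ((a : ℝ) + 2) / ((a : ℝ) + 1) by
        field_simp; ring, inv_div]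
    have hstep : (1/3 : ℝ) ≤ (((a : ℝ) + 1) / ((a : ℝ) + 2)) ^ (a + 1) := by
      rw [hq, inv_pow, one_div]
      exact inv_anti₀ (by positivity) hexp
    calc (1/3 : ℝ) ≤ (((a : ℝ) + 1) / ((a : ℝ) + 2)) ^ (a + 1) := hstep
      _ ≤ (1 - ε a) ^ (a + 1) := pow_le_pow_left₀ (by positivity) (hεlt a) _
  -- bound on ε
  have hεbd : ∀ a : ℕ, ε a ≤ 3 * m * ((m + 1)⁻¹) ^ (a + 2) := by
    intro a
    have hP : (0:ℝ) < (m + 1) ^ (a + 2) := by positivity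
    have hI := hid a
    have h13 := hg13 a
    have h0 := hε0 a
    rw [inv_pow, mul_comm (3*m), ← div_eq_inv_mul, le_div_iff₀ hP]
    nlinarith [mul_le_mul_of_nonneg_left h13 (mul_nonneg h0 hP.le)]
  -- (a+1) * ε a → 0
  have hr0 : (0:ℝ) ≤ (m + 1)⁻¹ := by positivity
  have hr1 : (m + 1)⁻¹ < 1 := by
    rw [inv_lt_one_iff₀]; right; exact hm1'
  have hgeo : Tendsto (fun n : ℕ => (n : ℝ) * ((m + 1)⁻¹) ^ n) atTop (nhds 0) :=
    tendsto_self_mul_const_pow_of_lt_one hr0 hr1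
  have hshift : Tendsto (fun a : ℕ => ((a : ℝ) + 1) * ((m + 1)⁻¹) ^ (a + 1))
      atTop (nhds 0) := by
    have h := hgeo.comp (tendsto_add_atTop_nat 1)
    exact h.congr fun a => by simp only [Function.comp_apply]; push_cast; ring
  have hBnd : Tendsto (fun a : ℕ => 3 * m * (m + 1)⁻¹ *
      (((a : ℝ) + 1) * ((m + 1)⁻¹) ^ (a + 1))) atTop (nhds 0) := by
    simpa using hshift.const_mul (3 * m * (m + 1)⁻¹)
  have h0 : Tendsto (fun a : ℕ => ((a : ℝ) + 1) * ε a) atTop (nhds 0) := by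
    refine squeeze_zero (fun a => mul_nonneg (by positivity) (hε0 a)) (fun a => ?_) hBnd
    have h := mul_le_mul_of_nonneg_left (hεbd a) (show (0:ℝ) ≤ (a : ℝ) + 1 by positivity)
    calc ((a : ℝ) + 1) * ε a ≤ ((a : ℝ) + 1) * (3 * m * ((m + 1)⁻¹) ^ (a + 2)) := h
      _ = 3 * m * (m + 1)⁻¹ * (((a : ℝ) + 1) * ((m + 1)⁻¹) ^ (a + 1)) := by ring
  -- (1-ε)^(a+1) → 1
  have hgl : Tendsto (fun a : ℕ => (1 - ε a) ^ (a + 1)) atTop (nhds 1) := by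
    have hlow : Tendsto (fun a : ℕ => 1 - ((a : ℝ) + 1) * ε a) atTop (nhds 1) := by
      simpa using (tendsto_const_nhds (x := (1:ℝ)) (f := atTop)).sub h0
    refine tendsto_of_tendsto_of_tendsto_of_le_of_le hlow tendsto_const_nhds
      (fun a => ?_) (fun a => ?_)
    · have hε2 : (-2:ℝ) ≤ -ε a := by
        have := hgpos a; have := hε0 a; linarith
      have h := one_add_mul_le_pow hε2 (a + 1)
      calc 1 - ((a : ℝ) + 1) * ε a = 1 + ((a + 1 : ℕ) : ℝ) * (-ε a) := by push_cast; ring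
        _ ≤ (1 + -ε a) ^ (a + 1) := h
        _ = (1 - ε a) ^ (a + 1) := by ring
    · exact pow_le_one₀ (hgpos a).le (by linarith [hε0 a])
  -- second statement
  have hfeq : (fun a : ℕ => ε a * (m + 1) ^ (a + 2)) =
      fun a : ℕ => m / (1 - ε a) ^ (a + 1) := by
    funext a
    have hne : (1 - ε a) ^ (a + 1) ≠ 0 := (pow_pos (hgpos a) _).ne'
    field_simp
    linear_combination hid a
  have h2 : Tendsto (fun a : ℕ => ε a * (m + 1) ^ (a + 2)) atTop (nhds m) := by
    rw [hfeq]
    have := (tendsto_const_nhds (x := m) (f := atTop)).div hgl one_ne_zero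
    rw [div_one] at this; exact this
  refine ⟨hid, h2, ?_⟩
  -- third statement
  have hfun : (fun a : ℕ => ((m + 1) - ρ a) / (m * (m + 1) ^ (-(a : ℤ) - 1))) =
      fun a : ℕ => (ε a * (m + 1) ^ (a + 2)) / m := by
    funext a
    have hz : (m + 1) ^ (-(a : ℤ) - 1) = ((m + 1) ^ (a + 1))⁻¹ := by
      rw [show -(a:ℤ) - 1 = -((a + 1 : ℕ) : ℤ) by push_cast; ring, zpow_neg, zpow_natCast]
    rw [hz, hρε a]
    have hP : ((m:ℝ) + 1) ^ (a + 1) ≠ 0 := by positivity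
    field_simp
    ring
  rw [hfun]
  have := h2.div_const m
  simpa [div_self hm.ne'] using this
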